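/- The operator G†G equals the group average over the symmetry group: G†G = 2^{−|I|} Σ_{s ∈ S} X(s); consequently G†G = (|S| / 2^{|I|}) · Π, where Π is the orthogonal projection of H_m onto the symmetric subspace {ψ ∈ H_m : X(s)ψ = ψ for all s ∈ S}, |I| is the cardinality of I and |S| the cardinality of S. -/

import Mathlib

set_option linter.unusedSectionVars false

noncomputable section

namespace GaugingFractal

/-- The sign `(-1)^t` attached to a `ZMod 2` exponent. -/
def sgn (t : ZMod 2) : ℂ := (-1 : ℂ) ^ t.val

lemma sgn_mul_self (t : ZMod 2) : sgn t * sgn t = 1 := by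
  unfold sgn
  rw [← pow_add, ← two_mul, pow_mul]
  norm_num

lemma zmodfun_add_self {K : Type*} (k : K → ZMod 2) : k + k = 0 := by
  funext j
  exact CharTwo.add_self_eq_zero _

/-- Hilbert space of qubits labelled by a finite set `K`; the computational basis
vector `e_a` is indexed by a pattern `a : K → ZMod 2`. -/
abbrev HS (K : Type*) := EuclideanSpace ℂ (K → ZMod 2)

section Single
variable {K : Type*} [Fintype K] [DecidableEq K]

/-- Pauli X operator: `X(p) e_a = e_{a+p}`. -/
def XOp (p : K → ZMod 2) : HS K →ₗ[ℂ] HS K where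
  toFun ψ := WithLp.toLp 2 (fun a => ψ (a + p))
  map_add' _ _ := rfl
  map_smul' _ _ := rfl

/-- Pauli Z operator: `Z(p) e_a = (-1)^{Σ_i p i * a i} e_a`. -/
def ZOp (p : K → ZMod 2) : HS K →ₗ[ℂ] HS K where
  toFun ψ := WithLp.toLp 2 (fun a => sgn (∑ i, p i * a i) * ψ a)
  map_add' ψ φ := by
    ext a
    exact mul_add _ _ _
  map_smul' c ψ := by
    ext a
    simp only [RingHom.id_apply, PiLp.smul_apply, PiLp.toLp_apply, smul_eq_mul]
    ring

end Single

section Pair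

variable {I J : Type*} [Fintype I] [DecidableEq I] [Fintype J] [DecidableEq J]

/-- Hilbert space of the matter qubits (labelled by `I`) tensored with the gauge
qubits (labelled by `J`): the computational basis vector indexed by `(a, b)`
realizes the tensor product `e_a ⊗ f_b`. -/
abbrev HS2 (I J : Type*) := EuclideanSpace ℂ ((I → ZMod 2) × (J → ZMod 2))

/-- `X(p) ⊗ X_g(q)` on `H_m ⊗ H_g`. -/
def XXOp (p : I → ZMod 2) (q : J → ZMod 2) : HS2 I J →ₗ[ℂ] HS2 I J where
  toFun ψ := WithLp.toLp 2 (fun ab => ψ (ab.1 + p, ab.2 + q))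
  map_add' _ _ := rfl
  map_smul' _ _ := rfl

/-- `X(p) ⊗ Z_g(q)` on `H_m ⊗ H_g`. -/
def XZOp (p : I → ZMod 2) (q : J → ZMod 2) : HS2 I J →ₗ[ℂ] HS2 I J where
  toFun ψ := WithLp.toLp 2 (fun ab => sgn (∑ j, q j * ab.2 j) * ψ (ab.1 + p, ab.2))
  map_add' ψ φ := by
    ext ab
    exact mul_add _ _ _
  map_smul' c ψ := by
    ext ab
    simp only [RingHom.id_apply, PiLp.smul_apply, PiLp.toLp_apply, smul_eq_mul]
    ring

/-- `Z(p) ⊗ X_g(q)` on `H_m ⊗ H_g`. -/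
def ZXOp (p : I → ZMod 2) (q : J → ZMod 2) : HS2 I J →ₗ[ℂ] HS2 I J where
  toFun ψ := WithLp.toLp 2 (fun ab => sgn (∑ i, p i * ab.1 i) * ψ (ab.1, ab.2 + q))
  map_add' ψ φ := by
    ext ab
    exact mul_add _ _ _
  map_smul' c ψ := by
    ext ab
    simp only [RingHom.id_apply, PiLp.smul_apply, PiLp.toLp_apply, smul_eq_mul]
    ring

/-- The flux operator `1 ⊗ Z_g(k)` on `H_m ⊗ H_g`. -/
def IZOp (k : J → ZMod 2) : HS2 I J →ₗ[ℂ] HS2 I J := XZOp 0 k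

variable (A : J → Finset I)

/-- The boundary map `∂ : (I → ZMod 2) → (J → ZMod 2)`, `(∂p)(j) = Σ_{i ∈ A j} p(i)`. -/
def bnd (p : I → ZMod 2) : J → ZMod 2 := fun j => ∑ i ∈ A j, p i

/-- The coboundary map `δ : (J → ZMod 2) → (I → ZMod 2)`, `(δk)(i) = Σ_{j : i ∈ A j} k(j)`. -/
def cobnd (k : J → ZMod 2) : I → ZMod 2 :=
  fun i => ∑ j ∈ Finset.univ.filter (fun j => i ∈ A j), k j

/-- The indicator pattern `χ_i` of a matter qubit `i`. -/
def chi (i : I) : I → ZMod 2 := Pi.single i 1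

/-- The indicator pattern `κ_j` of a gauge qubit `j`. -/
def kap (j : J) : J → ZMod 2 := Pi.single j 1

/-- The local gauge constraint `C_i = X(χ_i) ⊗ X_g(∂χ_i)`. -/
def C (i : I) : HS2 I J →ₗ[ℂ] HS2 I J := XXOp (chi i) (bnd A (chi i))

lemma XXOp_mul (p p' : I → ZMod 2) (q q' : J → ZMod 2) :
    (XXOp p q : Module.End ℂ (HS2 I J)) * XXOp p' q' = XXOp (p + p') (q + q') := by
  apply LinearMap.ext
  intro ψ
  ext ab
  show ψ (ab.1 + p + p', ab.2 + q + q') = ψ (ab.1 + (p + p'), ab.2 + (q + q'))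
  rw [add_assoc, add_assoc]

lemma C_commute (i i' : I) : Commute (C A i) (C A i') := by
  show C A i * C A i' = C A i' * C A i
  unfold C
  rw [XXOp_mul, XXOp_mul, add_comm (chi i) (chi i'),
    add_comm (bnd A (chi i)) (bnd A (chi i'))]

/-- The product of gauge constraints `C^s = Π_{i : s i = 1} C_i`. -/
def Cprod (s : I → ZMod 2) : Module.End ℂ (HS2 I J) :=
  (Finset.univ.filter fun i => s i = 1).noncommProd (fun i => C A i)
    (fun i _ j _ _ => C_commute A i j)

lemma Chalf_commute (i i' : I) :
    Commute ((2 : ℂ)⁻¹ • (1 + C A i)) ((2 : ℂ)⁻¹ • (1 + C A i')) := by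
  have h : Commute (1 + C A i) (1 + C A i') :=
    (Commute.one_left _).add_left ((Commute.one_right _).add_right (C_commute A i i'))
  exact (h.smul_left _).smul_right _

/-- The projector `P = Π_{i ∈ I} (1 + C_i)/2` onto the gauge invariant subspace. -/
def Pproj : Module.End ℂ (HS2 I J) :=
  Finset.univ.noncommProd (fun i => (2 : ℂ)⁻¹ • (1 + C A i))
    (fun i _ j _ _ => Chalf_commute A i j)

/-- `ψ ↦ ψ ⊗ f_0`, the inclusion `1_m ⊗ |f_0⟩ : H_m → H_m ⊗ H_g` determined by the
all-zeros gauge basis vector `f_0`. -/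
def incl : HS I →ₗ[ℂ] HS2 I J where
  toFun ψ := WithLp.toLp 2 (fun ab => if ab.2 = 0 then ψ ab.1 else 0)
  map_add' ψ φ := by
    ext ab
    by_cases h : ab.2 = 0 <;> simp [h]
  map_smul' c ψ := by
    ext ab
    by_cases h : ab.2 = 0 <;> simp [h]

/-- The compression `1_m ⊗ ⟨f_0| : H_m ⊗ H_g → H_m`. -/
def res0 : HS2 I J →ₗ[ℂ] HS I where
  toFun ψ := WithLp.toLp 2 (fun a => ψ (a, 0))
  map_add' _ _ := rfl
  map_smul' _ _ := rfl

/-- The state gauging map `G ψ = P (ψ ⊗ f_0)`. -/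
def Gmap : HS I →ₗ[ℂ] HS2 I J := Pproj A ∘ₗ incl

/-- The operator gauging map `𝒢[O] = Σ_{s : I → ZMod 2} C^s (O ⊗ |f_0⟩⟨f_0|) C^s`,
where `O ⊗ |f_0⟩⟨f_0| = incl ∘ O ∘ res0`. -/
def gaugeOp (O : Module.End ℂ (HS I)) : Module.End ℂ (HS2 I J) :=
  ∑ s : I → ZMod 2, Cprod A s * (incl ∘ₗ O ∘ₗ res0) * Cprod A s

/-- The joint fixed subspace `{v | C_i v = v for all i}` of the gauge constraints. -/
def fixedSub : Submodule ℂ (HS2 I J) where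
  carrier := {v | ∀ i, C A i v = v}
  add_mem' := by
    intro x y hx hy i
    rw [map_add, hx i, hy i]
  zero_mem' := by
    intro i
    simp
  smul_mem' := by
    intro c x hx i
    rw [map_smul, hx i]

/-- The symmetric subspace `{ψ | X(s) ψ = ψ for all s with ∂s = 0}` of the matter space. -/
def symmSub : Submodule ℂ (HS I) where
  carrier := {ψ | ∀ s, bnd A s = 0 → XOp s ψ = ψ}
  add_mem' := by
    intro x y hx hy s hs
    rw [map_add, hx s hs, hy s hs]
  zero_mem' := by
    intro s hs
    simp
  smul_mem' := by
    intro c x hx s hs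
    rw [map_smul, hx s hs]

/-- The cluster stabilizer `K_i = X(χ_i) ⊗ Z_g(∂χ_i)`. -/
def Kst (i : I) : Module.End ℂ (HS2 I J) := XZOp (chi i) (bnd A (chi i))

/-- The cluster stabilizer `L_j = Z(δκ_j) ⊗ X_g(κ_j)`. -/
def Lst (j : J) : Module.End ℂ (HS2 I J) := ZXOp (cobnd A (kap j)) (kap j)

/-- The disentangling circuit of controlled-X gates from each matter qubit to its
adjacent gauge qubits: `V (e_a ⊗ f_b) = e_a ⊗ f_{b + ∂a}`. -/
def Vequiv : HS2 I J ≃ₗ[ℂ] HS2 I J where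
  toFun ψ := WithLp.toLp 2 (fun ab => ψ (ab.1, ab.2 + bnd A ab.1))
  invFun ψ := WithLp.toLp 2 (fun ab => ψ (ab.1, ab.2 + bnd A ab.1))
  map_add' _ _ := rfl
  map_smul' _ _ := rfl
  left_inv ψ := by
    ext ab
    show ψ (ab.1, ab.2 + bnd A ab.1 + bnd A ab.1) = ψ ab
    rw [add_assoc, zmodfun_add_self, add_zero]
  right_inv ψ := by
    ext ab
    show ψ (ab.1, ab.2 + bnd A ab.1 + bnd A ab.1) = ψ ab
    rw [add_assoc, zmodfun_add_self, add_zero]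

/-- The circuit of controlled-Z gates along the edges of the bipartite graph:
`U (e_a ⊗ f_b) = (-1)^{Σ_j (∂a)(j)·b(j)} e_a ⊗ f_b`. -/
def Uequiv : HS2 I J ≃ₗ[ℂ] HS2 I J where
  toFun ψ := WithLp.toLp 2 (fun ab => sgn (∑ j, bnd A ab.1 j * ab.2 j) * ψ ab)
  invFun ψ := WithLp.toLp 2 (fun ab => sgn (∑ j, bnd A ab.1 j * ab.2 j) * ψ ab)
  map_add' ψ φ := by
    ext ab
    exact mul_add _ _ _
  map_smul' c ψ := by
    ext ab
    simp only [RingHom.id_apply, PiLp.smul_apply, PiLp.toLp_apply, smul_eq_mul]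
    ring
  left_inv ψ := by
    ext ab
    show sgn _ * (sgn _ * ψ ab) = ψ ab
    rw [← mul_assoc, sgn_mul_self, one_mul]
  right_inv ψ := by
    ext ab
    show sgn _ * (sgn _ * ψ ab) = ψ ab
    rw [← mul_assoc, sgn_mul_self, one_mul]


/- ### Auxiliary lemmas -/

lemma zmod2_cases (t : ZMod 2) : t = 0 ∨ t = 1 := by
  revert t; decide

lemma XXOp_zero : (XXOp (0 : I → ZMod 2) (0 : J → ZMod 2)) = (1 : Module.End ℂ (HS2 I J)) := by
  apply LinearMap.ext; intro ψ; ext ab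
  show ψ (ab.1 + 0, ab.2 + 0) = ψ ab
  rw [add_zero, add_zero]

lemma bnd_add (p p' : I → ZMod 2) : bnd A (p + p') = bnd A p + bnd A p' := by
  funext j; simp [bnd, Finset.sum_add_distrib]

lemma bnd_zero : bnd A (0 : I → ZMod 2) = 0 := by
  funext j; simp [bnd]

lemma noncommProd_C (T : Finset I) :
    T.noncommProd (fun i => C A i) (fun i _ j _ _ => C_commute A i j)
      = XXOp (∑ i ∈ T, chi i) (bnd A (∑ i ∈ T, chi i)) := by
  classical
  induction T using Finset.induction_on with
  | empty =>
    simp [Finset.noncommProd_empty, bnd_zero, XXOp_zero]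
    exact Finset.noncommProd_empty _ _
  | @insert a T ha ih =>
    erw [Finset.noncommProd_insert_of_notMem _ _ _ _ ha, ih, Finset.sum_insert ha]
    show XXOp (chi a) (bnd A (chi a)) * _ = _
    rw [XXOp_mul, ← bnd_add]

lemma sum_chi_filter (s : I → ZMod 2) :
    ∑ i ∈ Finset.univ.filter (fun i => s i = 1), chi i = s := by
  funext i'
  rw [Finset.sum_apply]
  simp only [chi, Pi.single_apply]
  rw [Finset.sum_ite_eq]
  rcases zmod2_cases (s i') with h | h <;> simp [h]

lemma Cprod_eq (s : I → ZMod 2) : Cprod A s = XXOp s (bnd A s) := by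
  unfold Cprod
  rw [noncommProd_C, sum_chi_filter]

lemma noncommProd_half (T : Finset I) :
    T.noncommProd (fun i => (2 : ℂ)⁻¹ • (1 + C A i)) (fun i _ j _ _ => Chalf_commute A i j)
      = ((2 : ℂ) ^ T.card)⁻¹ •
          ∑ T' ∈ T.powerset,
            T'.noncommProd (fun i => C A i) (fun i _ j _ _ => C_commute A i j) := by
  classical
  induction T using Finset.induction_on with
  | empty =>
    simp [Finset.noncommProd_empty]
    exact (Finset.noncommProd_empty _ _).symm
  | @insert a T ha ih =>
    have hdisj : Disjoint T.powerset (T.powerset.image (insert a)) := by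
      rw [Finset.disjoint_left]
      intro T' hT' hT''
      rcases Finset.mem_image.1 hT'' with ⟨T₂, hT₂, rfl⟩
      exact ha (Finset.mem_powerset.1 hT' (Finset.mem_insert_self a T₂))
    have hinj : ∀ T₁ ∈ T.powerset, ∀ T₂ ∈ T.powerset,
        insert a T₁ = insert a T₂ → T₁ = T₂ := by
      intro T₁ h₁ T₂ h₂ h
      have ha₁ : a ∉ T₁ := fun hc => ha (Finset.mem_powerset.1 h₁ hc)
      have ha₂ : a ∉ T₂ := fun hc => ha (Finset.mem_powerset.1 h₂ hc)
      rw [← Finset.erase_insert ha₁, ← Finset.erase_insert ha₂, h]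
    erw [Finset.noncommProd_insert_of_notMem _ _ _ _ ha, ih, Finset.powerset_insert,
      Finset.sum_union hdisj, Finset.sum_image hinj, Finset.card_insert_of_notMem ha]
    have himg : ∀ T' ∈ T.powerset,
        (insert a T').noncommProd (fun i => C A i) (fun i _ j _ _ => C_commute A i j)
          = C A a * T'.noncommProd (fun i => C A i) (fun i _ j _ _ => C_commute A i j) := by
      intro T' hT'
      exact Finset.noncommProd_insert_of_notMem _ _ _ _
        (fun hc => ha (Finset.mem_powerset.1 hT' hc))
    rw [Finset.sum_congr rfl himg, ← Finset.mul_sum]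
    rw [smul_mul_smul_comm, add_mul, one_mul, smul_add]
    rw [pow_succ]
    rw [mul_inv]
    rw [mul_comm ((2:ℂ)^T.card)⁻¹ (2:ℂ)⁻¹, smul_add]

/-- The bijection between `ZMod 2` patterns on `I` and subsets of `I`. -/
def indicatorEquiv : (I → ZMod 2) ≃ Finset I where
  toFun s := Finset.univ.filter (fun i => s i = 1)
  invFun T := fun i => if i ∈ T then 1 else 0
  left_inv := by
    intro s; funext i
    by_cases h : s i = 1
    · simp [h]
    · rcases zmod2_cases (s i) with h0 | h0
      · simp [h0]
      · exact absurd h0 h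
  right_inv := by
    intro T; ext i
    simp

lemma Pproj_eq :
    Pproj A = ((2 : ℂ) ^ Fintype.card I)⁻¹ • ∑ s : I → ZMod 2, XXOp s (bnd A s) := by
  classical
  unfold Pproj
  rw [noncommProd_half, Finset.card_univ]
  congr 1
  rw [Finset.powerset_univ]
  exact (Fintype.sum_equiv (indicatorEquiv (I := I)) (fun s => XXOp s (bnd A s))
    (fun T => T.noncommProd (fun i => C A i) (fun i _ j _ _ => C_commute A i j))
    (fun s => (Cprod_eq A s).symm)).symm

lemma card_patterns : Fintype.card (I → ZMod 2) = 2 ^ Fintype.card I := by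
  simp [Fintype.card_fun]

lemma Pproj_idem : Pproj A * Pproj A = Pproj A := by
  classical
  rw [Pproj_eq, smul_mul_smul_comm, Finset.sum_mul_sum]
  have key : ∀ s : I → ZMod 2,
      ∑ t : I → ZMod 2, XXOp s (bnd A s) * XXOp t (bnd A t)
        = ∑ u : I → ZMod 2, XXOp u (bnd A u) := by
    intro s
    refine Fintype.sum_equiv (Equiv.addLeft s) _ _ (fun t => ?_)
    rw [XXOp_mul, ← bnd_add]
    rfl
  rw [Finset.sum_congr rfl (fun s _ => key s), Finset.sum_const, Finset.card_univ,
    card_patterns, ← Nat.cast_smul_eq_nsmul ℂ, smul_smul]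
  congr 1
  have h2 : ((2 : ℂ) ^ Fintype.card I) ≠ 0 := pow_ne_zero _ two_ne_zero
  push_cast
  field_simp

/-- Inner-product form of self-adjointness of `XOp`. -/
lemma XOp_inner {K : Type*} [Fintype K] [DecidableEq K] (p : K → ZMod 2) (x y : HS K) :
    inner ℂ (XOp p x) y = (inner ℂ x (XOp p y) : ℂ) := by
  rw [PiLp.inner_apply, PiLp.inner_apply]
  refine Fintype.sum_equiv (Equiv.addRight p) _ _ (fun a => ?_)
  show (inner ℂ (x (a + p)) (y a) : ℂ) = inner ℂ (x (a + p)) (y (a + p + p))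
  rw [add_assoc, zmodfun_add_self, add_zero]

/-- Inner-product form of self-adjointness of `XXOp`. -/
lemma XXOp_inner (p : I → ZMod 2) (q : J → ZMod 2) (x y : HS2 I J) :
    inner ℂ (XXOp p q x) y = (inner ℂ x (XXOp p q y) : ℂ) := by
  rw [PiLp.inner_apply, PiLp.inner_apply]
  refine Fintype.sum_equiv (Equiv.addRight ((p, q) : (I → ZMod 2) × (J → ZMod 2))) _ _
    (fun ab => ?_)
  show (inner ℂ (x (ab.1 + p, ab.2 + q)) (y ab) : ℂ)
      = inner ℂ (x (ab.1 + p, ab.2 + q)) (y (ab.1 + p + p, ab.2 + q + q))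
  rw [add_assoc, add_assoc, zmodfun_add_self, zmodfun_add_self, add_zero, add_zero]

lemma XXOp_adjoint (p : I → ZMod 2) (q : J → ZMod 2) :
    LinearMap.adjoint (XXOp p q : HS2 I J →ₗ[ℂ] HS2 I J) = XXOp p q :=
  ((LinearMap.eq_adjoint_iff _ _).2 (fun x y => XXOp_inner p q x y)).symm

lemma Pproj_adjoint : LinearMap.adjoint (Pproj A : HS2 I J →ₗ[ℂ] HS2 I J) = Pproj A := by
  refine ((LinearMap.eq_adjoint_iff (Pproj A) (Pproj A)).2 (fun x y => ?_)).symm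
  rw [Pproj_eq]
  rw [LinearMap.smul_apply, LinearMap.smul_apply, LinearMap.sum_apply, LinearMap.sum_apply,
    inner_smul_left, inner_smul_right, sum_inner, inner_sum]
  rw [show (starRingEnd ℂ) ((2 : ℂ) ^ Fintype.card I)⁻¹ = ((2 : ℂ) ^ Fintype.card I)⁻¹ by
    simp [map_ofNat]]
  congr 1
  exact Finset.sum_congr rfl fun s _ => XXOp_inner s (bnd A s) x y

set_option maxHeartbeats 1000000 in
lemma incl_adjoint :
    LinearMap.adjoint (incl : HS I →ₗ[ℂ] HS2 I J) = res0 := by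
  have h : ∀ (x : HS2 I J) (y : HS I), (inner ℂ (res0 x) y : ℂ) = inner ℂ x (incl y) := by
    intro x y
    rw [PiLp.inner_apply, PiLp.inner_apply, Fintype.sum_prod_type]
    refine Finset.sum_congr rfl fun a _ => ?_
    rw [Finset.sum_eq_single (0 : J → ZMod 2)]
    · show y a * (starRingEnd ℂ) (x (a, 0))
          = (if (0 : J → ZMod 2) = 0 then y a else 0) * (starRingEnd ℂ) (x (a, 0))
      rw [if_pos rfl]
    · intro b _ hb
      show (if b = 0 then y a else 0) * (starRingEnd ℂ) (x (a, b)) = 0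
      rw [if_neg hb, zero_mul]
    · intro hh
      exact absurd (Finset.mem_univ _) hh
  refine LinearMap.ext fun x => ?_
  refine ext_inner_right ℂ fun y => ?_
  rw [LinearMap.adjoint_inner_left]
  exact (h x y).symm

lemma res0_XXOp_incl (s : I → ZMod 2) (q : J → ZMod 2) :
    res0 ∘ₗ (XXOp s q : HS2 I J →ₗ[ℂ] HS2 I J) ∘ₗ incl
      = if q = 0 then (XOp s : HS I →ₗ[ℂ] HS I) else 0 := by
  apply LinearMap.ext; intro ψ; ext a
  show (if (0 : J → ZMod 2) + q = 0 then ψ (a + s) else 0)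
      = ((if q = 0 then (XOp s : HS I →ₗ[ℂ] HS I) else 0) ψ) a
  rw [zero_add]
  by_cases h : q = 0 <;> simp [h] <;> rfl

lemma res0_Pproj_incl :
    res0 ∘ₗ (Pproj A : HS2 I J →ₗ[ℂ] HS2 I J) ∘ₗ incl
      = ((2 : ℂ) ^ Fintype.card I)⁻¹ •
          ∑ s ∈ Finset.univ.filter (fun s : I → ZMod 2 => bnd A s = 0), XOp s := by
  rw [Pproj_eq]
  apply LinearMap.ext; intro ψ
  rw [LinearMap.comp_apply, LinearMap.comp_apply, LinearMap.smul_apply, LinearMap.sum_apply,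
    map_smul, map_sum, LinearMap.smul_apply, LinearMap.sum_apply]
  congr 1
  rw [Finset.sum_filter]
  refine Finset.sum_congr rfl fun s _ => ?_
  have h := LinearMap.congr_fun (res0_XXOp_incl s (bnd A s)) ψ
  simp only [LinearMap.comp_apply] at h
  rw [h, apply_ite (fun f : HS I →ₗ[ℂ] HS I => f ψ)]
  simp

/-- `G†G = 2^{−|I|} Σ_{s ∈ S} X(s)`, and consequently
`G†G = (|S| / 2^{|I|}) · Π` with `Π` the orthogonal projection onto the symmetric subspace. -/
theorem Gmap_adjoint_comp (A : J → Finset I) :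
    LinearMap.adjoint (Gmap A) ∘ₗ Gmap A
      = ((2 : ℂ) ^ Fintype.card I)⁻¹ •
          ∑ s ∈ Finset.univ.filter (fun s : I → ZMod 2 => bnd A s = 0), XOp s
    ∧ LinearMap.adjoint (Gmap A) ∘ₗ Gmap A
      = ((Nat.card {s : I → ZMod 2 // bnd A s = 0} : ℂ) / 2 ^ Fintype.card I) •
          ((symmSub A).subtype ∘ₗ (symmSub A).orthogonalProjectionOnto.toLinearMap) := by
  classical
  have hGG : LinearMap.adjoint (Gmap A) ∘ₗ Gmap A
      = res0 ∘ₗ (Pproj A : HS2 I J →ₗ[ℂ] HS2 I J) ∘ₗ incl := by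
    show LinearMap.adjoint (Pproj A ∘ₗ incl) ∘ₗ (Pproj A ∘ₗ incl) = _
    rw [LinearMap.adjoint_comp, incl_adjoint, Pproj_adjoint]
    apply LinearMap.ext; intro ψ
    show res0 ((Pproj A) ((Pproj A) (incl ψ))) = res0 ((Pproj A) (incl ψ))
    rw [show (Pproj A) ((Pproj A) (incl ψ)) = (Pproj A * Pproj A) (incl ψ) from rfl,
      Pproj_idem]
  have part1 : LinearMap.adjoint (Gmap A) ∘ₗ Gmap A
      = ((2 : ℂ) ^ Fintype.card I)⁻¹ •
          ∑ s ∈ Finset.univ.filter (fun s : I → ZMod 2 => bnd A s = 0), XOp s :=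
    hGG.trans (res0_Pproj_incl A)
  refine ⟨part1, ?_⟩
  set F := Finset.univ.filter (fun s : I → ZMod 2 => bnd A s = 0) with hF
  have h0F : (0 : I → ZMod 2) ∈ F := by
    simp [hF, bnd_zero]
  have hcard : (Nat.card {s : I → ZMod 2 // bnd A s = 0} : ℂ) = (F.card : ℂ) := by
    rw [Nat.card_eq_fintype_card, Fintype.card_subtype]
  have hFne : (F.card : ℂ) ≠ 0 := by
    have h1 : 0 < F.card := Finset.card_pos.2 ⟨0, h0F⟩
    exact_mod_cast h1.ne'
  have hXX : ∀ (t s : I → ZMod 2) (ψ : HS I), XOp t (XOp s ψ) = XOp (t + s) ψ := by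
    intro t s ψ
    ext a
    show ψ (a + t + s) = ψ (a + (t + s))
    rw [add_assoc]
  have hproj : (symmSub A).subtype ∘ₗ (symmSub A).orthogonalProjectionOnto.toLinearMap
      = ((F.card : ℂ))⁻¹ • ∑ s ∈ F, XOp s := by
    apply LinearMap.ext; intro ψ
    have hv : ((F.card : ℂ))⁻¹ • ∑ s ∈ F, XOp s ψ ∈ symmSub A := by
      intro t ht
      rw [map_smul, map_sum]
      congr 1
      rw [Finset.sum_congr rfl (fun s _ => hXX t s ψ)]
      refine Finset.sum_nbij' (fun s => t + s) (fun s => t + s) ?_ ?_ ?_ ?_ ?_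
      · intro s hs
        rw [hF, Finset.mem_filter] at hs ⊢
        refine ⟨Finset.mem_univ _, ?_⟩
        rw [bnd_add, ht, hs.2, add_zero]
      · intro s hs
        rw [hF, Finset.mem_filter] at hs ⊢
        refine ⟨Finset.mem_univ _, ?_⟩
        rw [bnd_add, ht, hs.2, add_zero]
      · intro s _
        show t + (t + s) = s
        rw [← add_assoc, zmodfun_add_self, zero_add]
      · intro s _
        show t + (t + s) = s
        rw [← add_assoc, zmodfun_add_self, zero_add]
      · intro s _
        rfl
    have hvo : ∀ w ∈ symmSub A,
        (inner ℂ (ψ - ((F.card : ℂ))⁻¹ • ∑ s ∈ F, XOp s ψ) w : ℂ) = 0 := by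
      intro w hw
      rw [inner_sub_left, sub_eq_zero, inner_smul_left, sum_inner]
      have hterm : ∀ s ∈ F, (inner ℂ (XOp s ψ) w : ℂ) = inner ℂ ψ w := by
        intro s hs
        rw [hF, Finset.mem_filter] at hs
        rw [XOp_inner, hw s hs.2]
      rw [Finset.sum_congr rfl hterm, Finset.sum_const, nsmul_eq_mul]
      rw [show (starRingEnd ℂ) ((F.card : ℂ))⁻¹ = ((F.card : ℂ))⁻¹ by
        rw [map_inv₀, Complex.conj_natCast]]
      rw [← mul_assoc, inv_mul_cancel₀ hFne, one_mul]
    have heq := Submodule.eq_starProjection_of_mem_of_inner_eq_zero (K := symmSub A)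
      (u := ψ) hv hvo
    rw [LinearMap.comp_apply, LinearMap.smul_apply, LinearMap.sum_apply]
    exact heq
  rw [part1, hproj, hcard, smul_smul]
  congr 1
  field_simp

end Pair

end GaugingFractal
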